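/- arXiv:2409.07777 — 2 statements merged into one kernel-verified Lean document; each statement's English description precedes it below -/
import Mathlib

section
/- Let σ_w > 0, a > 0, ρ = a², and let n, L be positive integers with N = nL. Let Q₀ be the Gaussian distribution N(0, σ_w²) on ℝ and Q_ρ the two-point Gaussian mixture with density q_ρ(z) = ½ φ_{a,σ_w²}(z) + ½ φ_{−a,σ_w²}(z). Then D(Q_ρ^N ‖ Q₀^⊗N) ≤ (cosh(ρ/σ_w²)^n − 1)/L. -/
/-- Gaussian density with mean `m` and variance `v`. -/
noncomputable def gaussDensity (m v z : ℝ) : ℝ :=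
  (1 / Real.sqrt (2 * Real.pi * v)) * Real.exp (-(z - m) ^ 2 / (2 * v))

open MeasureTheory Real

lemma gaussDensity_eq (m : ℝ) {v : ℝ} (hv : 0 ≤ v) :
    gaussDensity m v = ProbabilityTheory.gaussianPDFReal m ⟨v, hv⟩ := by
  funext z
  simp [gaussDensity, ProbabilityTheory.gaussianPDFReal, one_div]
  rfl

lemma gaussDensity_pos (m : ℝ) {v : ℝ} (hv : 0 < v) (z : ℝ) : 0 < gaussDensity m v z := by
  rw [gaussDensity_eq m hv.le]
  exact ProbabilityTheory.gaussianPDFReal_pos _ _ _ (fun h => hv.ne' (congrArg NNReal.toReal h))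

lemma integrable_gaussDensity (m : ℝ) {v : ℝ} (hv : 0 < v) :
    Integrable (gaussDensity m v) := by
  rw [gaussDensity_eq m hv.le]
  exact ProbabilityTheory.integrable_gaussianPDFReal _ _

lemma integral_gaussDensity (m : ℝ) {v : ℝ} (hv : 0 < v) :
    ∫ z, gaussDensity m v z = 1 := by
  rw [gaussDensity_eq m hv.le]
  exact ProbabilityTheory.integral_gaussianPDFReal_eq_one _ (fun h => hv.ne' (congrArg NNReal.toReal h))

lemma continuous_gaussDensity (m v : ℝ) : Continuous (gaussDensity m v) := by
  unfold gaussDensity; fun_prop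

lemma gaussDensity_mul (m m' : ℝ) {v : ℝ} (hv : 0 < v) (z : ℝ) :
    gaussDensity m v z * gaussDensity m' v z
      = Real.exp (m * m' / v) * gaussDensity (m + m') v z * gaussDensity 0 v z := by
  unfold gaussDensity
  have h : Real.exp (-(z - m) ^ 2 / (2 * v)) * Real.exp (-(z - m') ^ 2 / (2 * v))
      = Real.exp (m * m' / v) *
        (Real.exp (-(z - (m + m')) ^ 2 / (2 * v)) * Real.exp (-(z - 0) ^ 2 / (2 * v))) := by
    rw [← Real.exp_add, ← Real.exp_add, ← Real.exp_add]
    congr 1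
    field_simp
    ring
  calc (1 / Real.sqrt (2 * Real.pi * v) * Real.exp (-(z - m) ^ 2 / (2 * v))) *
        (1 / Real.sqrt (2 * Real.pi * v) * Real.exp (-(z - m') ^ 2 / (2 * v)))
      = (1 / Real.sqrt (2 * Real.pi * v) * (1 / Real.sqrt (2 * Real.pi * v))) *
        (Real.exp (-(z - m) ^ 2 / (2 * v)) * Real.exp (-(z - m') ^ 2 / (2 * v))) := by ring
    _ = _ := by rw [h]; ring

/-- the two-point mixture density -/
noncomputable def qmix (a v : ℝ) : ℝ → ℝ := fun x =>
  (1 / 2) * gaussDensity a v x + (1 / 2) * gaussDensity (-a) v x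

lemma qmix_pos (a : ℝ) {v : ℝ} (hv : 0 < v) (x : ℝ) : 0 < qmix a v x := by
  have h1 := gaussDensity_pos a hv x
  have h2 := gaussDensity_pos (-a) hv x
  unfold qmix; positivity

lemma continuous_qmix (a v : ℝ) : Continuous (qmix a v) := by
  unfold qmix
  exact (continuous_const.mul (continuous_gaussDensity a v)).add
    (continuous_const.mul (continuous_gaussDensity (-a) v))

lemma integrable_qmix (a : ℝ) {v : ℝ} (hv : 0 < v) : Integrable (qmix a v) :=
  (((integrable_gaussDensity a hv).const_mul _).add
    ((integrable_gaussDensity (-a) hv).const_mul _))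

lemma integral_qmix (a : ℝ) {v : ℝ} (hv : 0 < v) : ∫ x, qmix a v x = 1 := by
  unfold qmix
  have h1 : Integrable (fun x => (1 / 2 : ℝ) * gaussDensity a v x) :=
    (integrable_gaussDensity a hv).const_mul _
  have h2 : Integrable (fun x => (1 / 2 : ℝ) * gaussDensity (-a) v x) :=
    (integrable_gaussDensity (-a) hv).const_mul _
  rw [integral_add h1 h2, integral_const_mul, integral_const_mul,
    integral_gaussDensity a hv, integral_gaussDensity (-a) hv]
  norm_num

lemma qmix_sq_div (a : ℝ) {v : ℝ} (hv : 0 < v) (x : ℝ) :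
    qmix a v x * qmix a v x / gaussDensity 0 v x
      = (1 / 4) * Real.exp (a * a / v) * gaussDensity (a + a) v x
        + (1 / 2) * Real.exp (-(a * a) / v) * gaussDensity 0 v x
        + (1 / 4) * Real.exp (a * a / v) * gaussDensity (-a + -a) v x := by
  rw [div_eq_iff (gaussDensity_pos 0 hv x).ne']
  have h1 := gaussDensity_mul a a hv x
  have h2 := gaussDensity_mul a (-a) hv x
  have h3 := gaussDensity_mul (-a) (-a) hv x
  have e2 : a * -a / v = -(a * a) / v := by ring
  have e3 : -a * -a / v = a * a / v := by ring
  rw [e2] at h2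
  rw [e3] at h3
  have e2' : a + -a = (0:ℝ) := by ring
  rw [e2'] at h2
  unfold qmix
  nlinarith [h1, h2, h3]

lemma integrable_qmix_sq_div (a : ℝ) {v : ℝ} (hv : 0 < v) :
    Integrable (fun x => qmix a v x * qmix a v x / gaussDensity 0 v x) := by
  have : (fun x => qmix a v x * qmix a v x / gaussDensity 0 v x)
      = fun x => (1 / 4) * Real.exp (a * a / v) * gaussDensity (a + a) v x
        + (1 / 2) * Real.exp (-(a * a) / v) * gaussDensity 0 v x
        + (1 / 4) * Real.exp (a * a / v) * gaussDensity (-a + -a) v x := by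
    funext x; exact qmix_sq_div a hv x
  rw [this]
  have h1 : Integrable (fun x => (1 / 4) * Real.exp (a * a / v) * gaussDensity (a + a) v x) :=
    (integrable_gaussDensity _ hv).const_mul _
  have h2 : Integrable (fun x => (1 / 2) * Real.exp (-(a * a) / v) * gaussDensity 0 v x) :=
    (integrable_gaussDensity _ hv).const_mul _
  have h3 : Integrable (fun x => (1 / 4) * Real.exp (a * a / v) * gaussDensity (-a + -a) v x) :=
    (integrable_gaussDensity _ hv).const_mul _
  exact (h1.add h2).add h3

lemma integral_qmix_sq_div (a : ℝ) {v : ℝ} (hv : 0 < v) :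
    ∫ x, qmix a v x * qmix a v x / gaussDensity 0 v x = Real.cosh (a * a / v) := by
  have : (fun x => qmix a v x * qmix a v x / gaussDensity 0 v x)
      = fun x => (1 / 4) * Real.exp (a * a / v) * gaussDensity (a + a) v x
        + (1 / 2) * Real.exp (-(a * a) / v) * gaussDensity 0 v x
        + (1 / 4) * Real.exp (a * a / v) * gaussDensity (-a + -a) v x := by
    funext x; exact qmix_sq_div a hv x
  rw [this]
  have h1 : Integrable (fun x => (1 / 4) * Real.exp (a * a / v) * gaussDensity (a + a) v x) :=
    (integrable_gaussDensity _ hv).const_mul _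
  have h2 : Integrable (fun x => (1 / 2) * Real.exp (-(a * a) / v) * gaussDensity 0 v x) :=
    (integrable_gaussDensity _ hv).const_mul _
  have h3 : Integrable (fun x => (1 / 4) * Real.exp (a * a / v) * gaussDensity (-a + -a) v x) :=
    (integrable_gaussDensity _ hv).const_mul _
  have h12 : Integrable (fun x => (1 / 4) * Real.exp (a * a / v) * gaussDensity (a + a) v x
      + (1 / 2) * Real.exp (-(a * a) / v) * gaussDensity 0 v x) := h1.add h2
  rw [integral_add h12 h3, integral_add h1 h2,
    integral_const_mul, integral_const_mul, integral_const_mul,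
    integral_gaussDensity _ hv, integral_gaussDensity _ hv, integral_gaussDensity _ hv,
    Real.cosh_eq, neg_div]
  rw [Real.exp_neg]
  rw [← Real.exp_neg]
  ring
lemma abs_log_le {r : ℝ} (hr : 0 < r) : |Real.log r| ≤ r + 1 / r := by
  rcases le_or_gt 1 r with h | h
  · rw [abs_of_nonneg (Real.log_nonneg h)]
    have h1 := Real.log_le_sub_one_of_pos hr
    have h0 : 0 < 1 / r := by positivity
    linarith
  · rw [abs_of_nonpos (Real.log_nonpos hr.le h.le)]
    have h1 : Real.log (1 / r) ≤ 1 / r - 1 := Real.log_le_sub_one_of_pos (by positivity)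
    rw [one_div, Real.log_inv] at h1
    rw [one_div]
    linarith

theorem aux (a v : ℝ) (hv : 0 < v) (n L : ℕ) (hn : 0 < n) (hL : 0 < L)
    (c : Fin L → Fin L → ℝ → ℝ)
    (hc : ∀ t ℓ x, c t ℓ x = if ℓ = t then
        (1 / 2) * gaussDensity a v x + (1 / 2) * gaussDensity (-a) v x
      else gaussDensity 0 v x)
    (F G : (Fin L → Fin n → ℝ) → ℝ)
    (hF : F = fun z => (1 / (L : ℝ)) * ∑ t : Fin L, ∏ ℓ : Fin L, ∏ i : Fin n, c t ℓ (z ℓ i))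
    (hG : G = fun z => ∏ ℓ : Fin L, ∏ i : Fin n, gaussDensity 0 v (z ℓ i)) :
    (∫ z : Fin L → Fin n → ℝ, F z * Real.log (F z / G z))
      ≤ (Real.cosh (a ^ 2 / v) ^ n - 1) / (L : ℝ) := by
  classical
  have hLpos : (0:ℝ) < L := by exact_mod_cast hL
  have hq0pos : ∀ x, 0 < gaussDensity 0 v x := gaussDensity_pos 0 hv
  have hceq : ∀ t ℓ, c t ℓ = if ℓ = t then qmix a v else gaussDensity 0 v := by
    intro t ℓ; funext x; rw [hc]; by_cases h : ℓ = t <;> simp [h, qmix]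
  have hcpos : ∀ t ℓ x, 0 < c t ℓ x := by
    intro t ℓ x
    by_cases h : ℓ = t
    · rw [hceq t ℓ, if_pos h]; exact qmix_pos a hv x
    · rw [hceq t ℓ, if_neg h]; exact hq0pos x
  have hccont : ∀ t ℓ, Continuous (c t ℓ) := by
    intro t ℓ
    by_cases h : ℓ = t
    · rw [hceq t ℓ, if_pos h]; exact continuous_qmix a v
    · rw [hceq t ℓ, if_neg h]; exact continuous_gaussDensity 0 v
  have hcint : ∀ t ℓ, MeasureTheory.Integrable (c t ℓ) := by
    intro t ℓ
    by_cases h : ℓ = t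
    · rw [hceq t ℓ, if_pos h]; exact integrable_qmix a hv
    · rw [hceq t ℓ, if_neg h]; exact integrable_gaussDensity 0 hv
  have hcval : ∀ t ℓ, ∫ x, c t ℓ x = 1 := by
    intro t ℓ
    by_cases h : ℓ = t
    · rw [hceq t ℓ, if_pos h]; exact integral_qmix a hv
    · rw [hceq t ℓ, if_neg h]; exact integral_gaussDensity 0 hv
  -- single-coordinate chi-square factors
  have hDint : ∀ t t' ℓ, MeasureTheory.Integrable
      (fun x => c t ℓ x * c t' ℓ x / gaussDensity 0 v x) := by
    intro t t' ℓ
    by_cases h1 : ℓ = t <;> by_cases h2 : ℓ = t'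
    · rw [hceq t ℓ, hceq t' ℓ, if_pos h1, if_pos h2]
      exact integrable_qmix_sq_div a hv
    · rw [hceq t ℓ, hceq t' ℓ, if_pos h1, if_neg h2]
      have he : (fun x => qmix a v x * gaussDensity 0 v x / gaussDensity 0 v x) = qmix a v := by
        funext x; rw [mul_div_assoc, div_self (hq0pos x).ne', mul_one]
      rw [he]; exact integrable_qmix a hv
    · rw [hceq t ℓ, hceq t' ℓ, if_neg h1, if_pos h2]
      have he : (fun x => gaussDensity 0 v x * qmix a v x / gaussDensity 0 v x) = qmix a v := by
        funext x; rw [mul_comm, mul_div_assoc, div_self (hq0pos x).ne', mul_one]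
      rw [he]; exact integrable_qmix a hv
    · rw [hceq t ℓ, hceq t' ℓ, if_neg h1, if_neg h2]
      have he : (fun x => gaussDensity 0 v x * gaussDensity 0 v x / gaussDensity 0 v x)
          = gaussDensity 0 v := by
        funext x; rw [mul_div_assoc, div_self (hq0pos x).ne', mul_one]
      rw [he]; exact integrable_gaussDensity 0 hv
  have hDval : ∀ t t' ℓ, (∫ x, c t ℓ x * c t' ℓ x / gaussDensity 0 v x)
      = if ℓ = t ∧ ℓ = t' then Real.cosh (a ^ 2 / v) else 1 := by
    intro t t' ℓ
    by_cases h1 : ℓ = t <;> by_cases h2 : ℓ = t'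
    · rw [hceq t ℓ, hceq t' ℓ, if_pos h1, if_pos h2, if_pos ⟨h1, h2⟩, sq]
      exact integral_qmix_sq_div a hv
    · rw [hceq t ℓ, hceq t' ℓ, if_pos h1, if_neg h2, if_neg (fun h => h2 h.2)]
      have he : (fun x => qmix a v x * gaussDensity 0 v x / gaussDensity 0 v x) = qmix a v := by
        funext x; rw [mul_div_assoc, div_self (hq0pos x).ne', mul_one]
      rw [he]; exact integral_qmix a hv
    · rw [hceq t ℓ, hceq t' ℓ, if_neg h1, if_pos h2, if_neg (fun h => h1 h.1)]
      have he : (fun x => gaussDensity 0 v x * qmix a v x / gaussDensity 0 v x) = qmix a v := by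
        funext x; rw [mul_comm, mul_div_assoc, div_self (hq0pos x).ne', mul_one]
      rw [he]; exact integral_qmix a hv
    · rw [hceq t ℓ, hceq t' ℓ, if_neg h1, if_neg h2, if_neg (fun h => h1 h.1)]
      have he : (fun x => gaussDensity 0 v x * gaussDensity 0 v x / gaussDensity 0 v x)
          = gaussDensity 0 v := by
        funext x; rw [mul_div_assoc, div_self (hq0pos x).ne', mul_one]
      rw [he]; exact integral_gaussDensity 0 hv
  -- integrability of the big products
  have hProdInt : ∀ t t', MeasureTheory.Integrable (fun z : Fin L → Fin n → ℝ =>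
      ∏ ℓ : Fin L, ∏ i : Fin n,
        (c t ℓ (z ℓ i) * c t' ℓ (z ℓ i) / gaussDensity 0 v (z ℓ i))) := by
    intro t t'
    exact MeasureTheory.Integrable.fintype_prod (f := fun (ℓ : Fin L) (y : Fin n → ℝ) =>
        ∏ i : Fin n, (c t ℓ (y i) * c t' ℓ (y i) / gaussDensity 0 v (y i)))
      (fun ℓ => MeasureTheory.Integrable.fintype_prod (f := fun (_ : Fin n) x =>
        c t ℓ x * c t' ℓ x / gaussDensity 0 v x) (fun _ => hDint t t' ℓ))
  have hPInt : ∀ t, MeasureTheory.Integrable (fun z : Fin L → Fin n → ℝ =>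
      ∏ ℓ : Fin L, ∏ i : Fin n, c t ℓ (z ℓ i)) := by
    intro t
    exact MeasureTheory.Integrable.fintype_prod (f := fun (ℓ : Fin L) (y : Fin n → ℝ) =>
        ∏ i : Fin n, c t ℓ (y i))
      (fun ℓ => MeasureTheory.Integrable.fintype_prod (f := fun (_ : Fin n) x => c t ℓ x)
        (fun _ => hcint t ℓ))
  have hGInt : MeasureTheory.Integrable G := by
    rw [hG]
    exact MeasureTheory.Integrable.fintype_prod (f := fun (ℓ : Fin L) (y : Fin n → ℝ) =>
        ∏ i : Fin n, gaussDensity 0 v (y i))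
      (fun ℓ => MeasureTheory.Integrable.fintype_prod (f := fun (_ : Fin n) x => gaussDensity 0 v x)
        (fun _ => integrable_gaussDensity 0 hv))
  -- integral values of the big products
  have hPVal : ∀ t, (∫ z : Fin L → Fin n → ℝ, ∏ ℓ : Fin L, ∏ i : Fin n, c t ℓ (z ℓ i)) = 1 := by
    intro t
    calc (∫ z : Fin L → Fin n → ℝ, ∏ ℓ : Fin L, ∏ i : Fin n, c t ℓ (z ℓ i))
        = ∏ ℓ : Fin L, ∫ y : Fin n → ℝ, ∏ i : Fin n, c t ℓ (y i) :=
          MeasureTheory.integral_fintype_prod_eq_prod (ι := Fin L)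
            (fun (ℓ : Fin L) (y : Fin n → ℝ) => ∏ i : Fin n, c t ℓ (y i))
      _ = ∏ ℓ : Fin L, (1:ℝ) := by
          refine Finset.prod_congr rfl fun ℓ _ => ?_
          calc (∫ y : Fin n → ℝ, ∏ i : Fin n, c t ℓ (y i))
              = ∏ _i : Fin n, ∫ x, c t ℓ x :=
                MeasureTheory.integral_fintype_prod_eq_prod (ι := Fin n)
                  (fun (_ : Fin n) (x : ℝ) => c t ℓ x)
            _ = 1 := by simp [hcval t ℓ]
      _ = 1 := by simp
  have hProdVal : ∀ t t', (∫ z : Fin L → Fin n → ℝ, ∏ ℓ : Fin L, ∏ i : Fin n,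
      (c t ℓ (z ℓ i) * c t' ℓ (z ℓ i) / gaussDensity 0 v (z ℓ i)))
      = if t = t' then Real.cosh (a ^ 2 / v) ^ n else 1 := by
    intro t t'
    have key : (∫ z : Fin L → Fin n → ℝ, ∏ ℓ : Fin L, ∏ i : Fin n,
        (c t ℓ (z ℓ i) * c t' ℓ (z ℓ i) / gaussDensity 0 v (z ℓ i)))
        = ∏ ℓ : Fin L, (if ℓ = t ∧ ℓ = t' then Real.cosh (a ^ 2 / v) else 1) ^ n := by
      calc (∫ z : Fin L → Fin n → ℝ, ∏ ℓ : Fin L, ∏ i : Fin n,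
          (c t ℓ (z ℓ i) * c t' ℓ (z ℓ i) / gaussDensity 0 v (z ℓ i)))
          = ∏ ℓ : Fin L, ∫ y : Fin n → ℝ, ∏ i : Fin n,
              (c t ℓ (y i) * c t' ℓ (y i) / gaussDensity 0 v (y i)) :=
            MeasureTheory.integral_fintype_prod_eq_prod (ι := Fin L)
              (fun (ℓ : Fin L) (y : Fin n → ℝ) => ∏ i : Fin n,
                (c t ℓ (y i) * c t' ℓ (y i) / gaussDensity 0 v (y i)))
        _ = ∏ ℓ : Fin L, (if ℓ = t ∧ ℓ = t' then Real.cosh (a ^ 2 / v) else 1) ^ n := by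
            refine Finset.prod_congr rfl fun ℓ _ => ?_
            calc (∫ y : Fin n → ℝ, ∏ i : Fin n,
                (c t ℓ (y i) * c t' ℓ (y i) / gaussDensity 0 v (y i)))
                = (∫ x, c t ℓ x * c t' ℓ x / gaussDensity 0 v x) ^ n := by
                  have := MeasureTheory.integral_fintype_prod_eq_pow (ι := Fin n) (μ := volume)
                    (fun x => c t ℓ x * c t' ℓ x / gaussDensity 0 v x)
                  simpa [← MeasureTheory.volume_pi] using this
              _ = _ := by rw [hDval t t' ℓ]
    rw [key]
    by_cases h : t = t'
    · subst h
      simp only [and_self]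
      have e1 : ∀ ℓ : Fin L, ((if ℓ = t then Real.cosh (a ^ 2 / v) else 1):ℝ) ^ n
          = (if ℓ = t then Real.cosh (a ^ 2 / v) ^ n else 1) := by
        intro ℓ; split_ifs <;> simp
      rw [Finset.prod_congr rfl fun ℓ _ => e1 ℓ, Finset.prod_ite_eq']
      simp
    · rw [if_neg h]
      refine Finset.prod_eq_one fun ℓ _ => ?_
      have hne : ¬(ℓ = t ∧ ℓ = t') := fun hh => h (hh.1.symm.trans hh.2)
      rw [if_neg hne, one_pow]
  -- positivity
  have hFpos : ∀ z, 0 < F z := by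
    intro z; rw [hF]
    haveI : Nonempty (Fin L) := ⟨⟨0, hL⟩⟩
    have hsum : 0 < ∑ t : Fin L, ∏ ℓ : Fin L, ∏ i : Fin n, c t ℓ (z ℓ i) :=
      Finset.sum_pos (fun t _ => Finset.prod_pos fun ℓ _ =>
        Finset.prod_pos fun i _ => hcpos t ℓ (z ℓ i)) Finset.univ_nonempty
    have : (0:ℝ) < 1 / (L:ℝ) := by positivity
    exact mul_pos this hsum
  have hGpos : ∀ z, 0 < G z := by
    intro z; rw [hG]
    exact Finset.prod_pos fun ℓ _ => Finset.prod_pos fun i _ => hq0pos _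
  -- splitting the chi-square product
  have hsplit : ∀ t t' z, (∏ ℓ : Fin L, ∏ i : Fin n,
      (c t ℓ (z ℓ i) * c t' ℓ (z ℓ i) / gaussDensity 0 v (z ℓ i))) * G z
      = (∏ ℓ : Fin L, ∏ i : Fin n, c t ℓ (z ℓ i)) *
        ∏ ℓ : Fin L, ∏ i : Fin n, c t' ℓ (z ℓ i) := by
    intro t t' z
    rw [hG]
    calc (∏ ℓ : Fin L, ∏ i : Fin n,
        (c t ℓ (z ℓ i) * c t' ℓ (z ℓ i) / gaussDensity 0 v (z ℓ i))) *
        ∏ ℓ : Fin L, ∏ i : Fin n, gaussDensity 0 v (z ℓ i)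
        = ∏ ℓ : Fin L, ((∏ i : Fin n,
            (c t ℓ (z ℓ i) * c t' ℓ (z ℓ i) / gaussDensity 0 v (z ℓ i))) *
            ∏ i : Fin n, gaussDensity 0 v (z ℓ i)) := Finset.prod_mul_distrib.symm
      _ = ∏ ℓ : Fin L, ∏ i : Fin n,
            ((c t ℓ (z ℓ i) * c t' ℓ (z ℓ i) / gaussDensity 0 v (z ℓ i)) *
              gaussDensity 0 v (z ℓ i)) :=
          Finset.prod_congr rfl fun ℓ _ => Finset.prod_mul_distrib.symm
      _ = ∏ ℓ : Fin L, ∏ i : Fin n, (c t ℓ (z ℓ i) * c t' ℓ (z ℓ i)) :=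
          Finset.prod_congr rfl fun ℓ _ => Finset.prod_congr rfl fun i _ =>
            div_mul_cancel₀ _ (hq0pos _).ne'
      _ = _ := by simp [Finset.prod_mul_distrib]
  -- pointwise chi-square representation
  have hFsq : ∀ z, F z ^ 2 / G z = (1 / (L:ℝ)) ^ 2 * ∑ t : Fin L, ∑ t' : Fin L,
      ∏ ℓ : Fin L, ∏ i : Fin n,
        (c t ℓ (z ℓ i) * c t' ℓ (z ℓ i) / gaussDensity 0 v (z ℓ i)) := by
    intro z
    rw [div_eq_iff (hGpos z).ne']
    simp only [hF]
    have h1 : (∑ t : Fin L, ∑ t' : Fin L, ∏ ℓ : Fin L, ∏ i : Fin n,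
        (c t ℓ (z ℓ i) * c t' ℓ (z ℓ i) / gaussDensity 0 v (z ℓ i))) * G z
        = ∑ t : Fin L, ∑ t' : Fin L,
          ((∏ ℓ : Fin L, ∏ i : Fin n, c t ℓ (z ℓ i)) *
            ∏ ℓ : Fin L, ∏ i : Fin n, c t' ℓ (z ℓ i)) := by
      rw [Finset.sum_mul]
      refine Finset.sum_congr rfl fun t _ => ?_
      rw [Finset.sum_mul]
      exact Finset.sum_congr rfl fun t' _ => hsplit t t' z
    rw [mul_assoc, h1, ← Finset.sum_mul_sum]
    ring
  have hrepr : (fun z : Fin L → Fin n → ℝ => F z ^ 2 / G z)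
      = fun z => (1 / (L:ℝ)) ^ 2 * ∑ t : Fin L, ∑ t' : Fin L,
        ∏ ℓ : Fin L, ∏ i : Fin n,
          (c t ℓ (z ℓ i) * c t' ℓ (z ℓ i) / gaussDensity 0 v (z ℓ i)) := funext hFsq
  have hFsqInt : MeasureTheory.Integrable (fun z : Fin L → Fin n → ℝ => F z ^ 2 / G z) := by
    rw [hrepr]
    exact (MeasureTheory.integrable_finset_sum _ fun t _ =>
      MeasureTheory.integrable_finset_sum _ fun t' _ => hProdInt t t').const_mul _
  have hFsqVal : (∫ z : Fin L → Fin n → ℝ, F z ^ 2 / G z)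
      = (Real.cosh (a ^ 2 / v) ^ n - 1) / (L:ℝ) + 1 := by
    rw [hrepr, MeasureTheory.integral_const_mul,
      MeasureTheory.integral_finset_sum _ (fun t _ =>
        MeasureTheory.integrable_finset_sum _ fun t' _ => hProdInt t t'),
      Finset.sum_congr rfl (fun t _ =>
        MeasureTheory.integral_finset_sum _ fun t' _ => hProdInt t t'),
      Finset.sum_congr rfl (fun t _ =>
        Finset.sum_congr rfl fun t' _ => hProdVal t t')]
    have hs : ∀ t : Fin L, (∑ t' : Fin L,
        ((if t = t' then Real.cosh (a ^ 2 / v) ^ n else 1):ℝ))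
        = (Real.cosh (a ^ 2 / v) ^ n - 1) + L := by
      intro t
      have e : ∀ t' : Fin L, ((if t = t' then Real.cosh (a ^ 2 / v) ^ n else 1):ℝ)
          = (if t = t' then Real.cosh (a ^ 2 / v) ^ n - 1 else 0) + 1 := by
        intro t'; split_ifs <;> ring
      rw [Finset.sum_congr rfl fun t' _ => e t', Finset.sum_add_distrib,
        Finset.sum_ite_eq, Finset.sum_const]
      simp [Finset.card_univ]
    rw [Finset.sum_congr rfl fun t _ => hs t, Finset.sum_const, Finset.card_univ,
      Fintype.card_fin, nsmul_eq_mul]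
    field_simp
  have hFint : MeasureTheory.Integrable F := by
    rw [hF]
    exact (MeasureTheory.integrable_finset_sum _ fun t _ => hPInt t).const_mul _
  have hFVal : (∫ z : Fin L → Fin n → ℝ, F z) = 1 := by
    simp only [hF]
    rw [MeasureTheory.integral_const_mul,
      MeasureTheory.integral_finset_sum _ fun t _ => hPInt t,
      Finset.sum_congr rfl fun t _ => hPVal t, Finset.sum_const, Finset.card_univ,
      Fintype.card_fin, nsmul_eq_mul]
    field_simp
  -- continuity / measurability
  have hFc : Continuous F := by
    rw [hF]
    exact continuous_const.mul (continuous_finset_sum _ fun t _ =>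
      continuous_finset_prod _ fun ℓ _ => continuous_finset_prod _ fun i _ =>
        (hccont t ℓ).comp ((continuous_apply i).comp (continuous_apply ℓ)))
  have hGc : Continuous G := by
    rw [hG]
    exact continuous_finset_prod _ fun ℓ _ => continuous_finset_prod _ fun i _ =>
      (continuous_gaussDensity 0 v).comp ((continuous_apply i).comp (continuous_apply ℓ))
  have hcont : Continuous fun z : Fin L → Fin n → ℝ => F z * Real.log (F z / G z) := by
    rw [continuous_iff_continuousAt]
    intro z
    exact hFc.continuousAt.mul
      ((hFc.continuousAt.div hGc.continuousAt (hGpos z).ne').log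
        (div_pos (hFpos z) (hGpos z)).ne')
  -- integrability of the entropy integrand
  have habs : ∀ z, ‖F z * Real.log (F z / G z)‖ ≤ F z ^ 2 / G z + G z := by
    intro z
    have hr : 0 < F z / G z := div_pos (hFpos z) (hGpos z)
    have h1 : |Real.log (F z / G z)| ≤ F z / G z + 1 / (F z / G z) := abs_log_le hr
    have h2 : F z * |Real.log (F z / G z)| ≤ F z * (F z / G z + 1 / (F z / G z)) :=
      mul_le_mul_of_nonneg_left h1 (hFpos z).le
    have hF0 : F z ≠ 0 := (hFpos z).ne'
    have hG0 : G z ≠ 0 := (hGpos z).ne'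
    have h3 : F z * (F z / G z + 1 / (F z / G z)) = F z ^ 2 / G z + G z := by
      rw [one_div_div]
      field_simp
    rw [Real.norm_eq_abs, abs_mul, abs_of_pos (hFpos z)]
    linarith
  have hint : MeasureTheory.Integrable
      (fun z : Fin L → Fin n → ℝ => F z * Real.log (F z / G z)) :=
    (hFsqInt.add hGInt).mono' hcont.aestronglyMeasurable
      (MeasureTheory.ae_of_all _ habs)
  have hgint : MeasureTheory.Integrable
      (fun z : Fin L → Fin n → ℝ => F z ^ 2 / G z - F z) := hFsqInt.sub hFint
  have hbnd : ∀ z, F z * Real.log (F z / G z) ≤ F z ^ 2 / G z - F z := by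
    intro z
    have hr : 0 < F z / G z := div_pos (hFpos z) (hGpos z)
    have hl := Real.log_le_sub_one_of_pos hr
    have h2 : F z * Real.log (F z / G z) ≤ F z * (F z / G z - 1) :=
      mul_le_mul_of_nonneg_left hl (hFpos z).le
    have hG0 : G z ≠ 0 := (hGpos z).ne'
    have h3 : F z * (F z / G z - 1) = F z ^ 2 / G z - F z := by
      field_simp
    linarith
  calc (∫ z : Fin L → Fin n → ℝ, F z * Real.log (F z / G z))
      ≤ ∫ z : Fin L → Fin n → ℝ, (F z ^ 2 / G z - F z) :=
        MeasureTheory.integral_mono hint hgint hbnd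
    _ = (Real.cosh (a ^ 2 / v) ^ n - 1) / (L : ℝ) := by
        rw [MeasureTheory.integral_sub hFsqInt hFint, hFsqVal, hFVal]
        ring

/-- For the AWGN eavesdropper channel with noise variance `σw²`, BPSK
amplitude `a > 0`, `ρ = a²`, the relative entropy between the slotted mixture density
`q_ρ^N` (uniform slot among `L` slots of length `n`) and the product `q0^⊗N` is at most
`(cosh(ρ/σw²)^n − 1)/L`. Coordinates of `ℝ^N`, `N = n·L`, are modeled as
`Fin L → Fin n → ℝ` (slot × position), with Lebesgue (volume) reference measure. -/
theorem stmt3 (σw a ρ : ℝ) (hσ : 0 < σw) (ha : 0 < a) (hρ : ρ = a ^ 2)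
    (n L : ℕ) (hn : 0 < n) (hL : 0 < L) :
    (∫ z : Fin L → Fin n → ℝ,
        ((1 / (L : ℝ)) * ∑ t : Fin L, ∏ ℓ : Fin L, ∏ i : Fin n,
            (if ℓ = t then
              (1 / 2) * gaussDensity a (σw ^ 2) (z ℓ i)
                + (1 / 2) * gaussDensity (-a) (σw ^ 2) (z ℓ i)
            else gaussDensity 0 (σw ^ 2) (z ℓ i))) *
          Real.log
            (((1 / (L : ℝ)) * ∑ t : Fin L, ∏ ℓ : Fin L, ∏ i : Fin n,
                (if ℓ = t then
                  (1 / 2) * gaussDensity a (σw ^ 2) (z ℓ i)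
                    + (1 / 2) * gaussDensity (-a) (σw ^ 2) (z ℓ i)
                else gaussDensity 0 (σw ^ 2) (z ℓ i))) /
              (∏ ℓ : Fin L, ∏ i : Fin n, gaussDensity 0 (σw ^ 2) (z ℓ i))))
      ≤ (Real.cosh (ρ / σw ^ 2) ^ n - 1) / (L : ℝ) := by
  subst hρ
  have hv : (0:ℝ) < σw ^ 2 := by positivity
  exact aux a (σw ^ 2) hv n L hn hL
    (fun t ℓ x => if ℓ = t then
        (1 / 2) * gaussDensity a (σw ^ 2) x + (1 / 2) * gaussDensity (-a) (σw ^ 2) x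
      else gaussDensity 0 (σw ^ 2) x)
    (fun t ℓ x => rfl)
    (fun z => (1 / (L : ℝ)) * ∑ t : Fin L, ∏ ℓ : Fin L, ∏ i : Fin n,
        (if ℓ = t then
          (1 / 2) * gaussDensity a (σw ^ 2) (z ℓ i)
            + (1 / 2) * gaussDensity (-a) (σw ^ 2) (z ℓ i)
        else gaussDensity 0 (σw ^ 2) (z ℓ i)))
    (fun z => ∏ ℓ : Fin L, ∏ i : Fin n, gaussDensity 0 (σw ^ 2) (z ℓ i))
    rfl rfl
end

section
/- Let 𝒵 be a finite set and Q₀, Q₁ probability mass functions on 𝒵 with Q₁ absolutely continuous with respect to Q₀ and Q₁ ≠ Q₀, and let χ₂ = Σ_z (Q₁(z)−Q₀(z))²/Q₀(z). Fix ε > 1. For each n, let L_n be a positive integer with L_n → ∞ and (log L_n)/n → 0, let N_n = n L_n, and let C_n be a nonempty finite set of binary codewords in {0,1}^n each of weight at least ε √(2 n log L_n / χ₂). Let H₀ be the hypothesis that Z^{N_n} is i.i.d. Q₀, and let H₁ be the hypothesis that a codeword x ∈ C_n chosen uniformly at random is placed in a slot t chosen uniformly at random among L_n slots of length n, and, independently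 across coordinates, Z_j ~ Q₁ at coordinates where the placed symbol is 1 and Z_j ~ Q₀ at all other coordinates. Then there exists a sequence of measurable rejection regions A_n ⊆ 𝒵^{N_n} such that the false-alarm probabilities α_n = P_{H₀}(A_n) and missed-detection probabilities β_n = P_{H₁}(A_nᶜ) both tend to 0 as n → ∞. -/
open Filter Finset

lemma sum_pi_prod {ι : Type*} [Fintype ι] [DecidableEq ι] {Y : Type*} [Fintype Y]
    (g : ι → Y → ℝ) :
    ∑ z : ι → Y, ∏ ℓ, g ℓ (z ℓ) = ∏ ℓ, ∑ y, g ℓ y := by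
  rw [Finset.prod_univ_sum, Fintype.piFinset_univ]

lemma sum_prod_pmf_one {Z : Type*} [Fintype Z] (Q0 : Z → ℝ) (hQ0sum : ∑ z, Q0 z = 1)
    (n : ℕ) : ∑ y : Fin n → Z, ∏ i, Q0 (y i) = 1 := by
  calc ∑ y : Fin n → Z, ∏ i, Q0 (y i) = ∏ _i : Fin n, ∑ z, Q0 z := sum_pi_prod _
    _ = 1 := by rw [hQ0sum]; simp

lemma chernoff_tail {Z : Type*} [Fintype Z] {n : ℕ} (q : Fin n → Z → ℝ)
    (hq : ∀ i z, 0 ≤ q i z) (f : Z → ℝ) (τ s : ℝ) (hs : 0 ≤ s) (M : Fin n → ℝ)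
    (hM : ∀ i, ∑ z, q i z * Real.exp (s * f z) ≤ M i) :
    ∑ y : Fin n → Z, (if τ ≤ ∑ i, f (y i) then (1 : ℝ) else 0) * ∏ i, q i (y i)
      ≤ Real.exp (-(s * τ)) * ∏ i, M i := by
  classical
  have step1 : ∑ y : Fin n → Z, (if τ ≤ ∑ i, f (y i) then (1 : ℝ) else 0) * ∏ i, q i (y i)
      ≤ ∑ y : Fin n → Z, Real.exp (-(s * τ)) * ∏ i, (q i (y i) * Real.exp (s * f (y i))) := by
    apply Finset.sum_le_sum
    intro y _
    have hprod : (0 : ℝ) ≤ ∏ i, q i (y i) := Finset.prod_nonneg fun i _ => hq i (y i)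
    have hrhs : Real.exp (-(s * τ)) * ∏ i, (q i (y i) * Real.exp (s * f (y i)))
        = Real.exp (s * (∑ i, f (y i)) - s * τ) * ∏ i, q i (y i) := by
      rw [Finset.prod_mul_distrib, ← Real.exp_sum, ← Finset.mul_sum, Real.exp_sub,
        Real.exp_neg]
      field_simp
    rw [hrhs]
    by_cases h : τ ≤ ∑ i, f (y i)
    · rw [if_pos h]
      apply mul_le_mul_of_nonneg_right _ hprod
      rw [show (1:ℝ) = Real.exp 0 by simp]
      apply Real.exp_le_exp.mpr
      have : 0 ≤ s * ((∑ i, f (y i)) - τ) := mul_nonneg hs (by linarith)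
      nlinarith
    · rw [if_neg h, zero_mul]
      positivity
  have step2 : ∑ y : Fin n → Z, Real.exp (-(s * τ)) * ∏ i, (q i (y i) * Real.exp (s * f (y i)))
      = Real.exp (-(s * τ)) * ∏ i, ∑ z, q i z * Real.exp (s * f z) := by
    rw [← Finset.mul_sum]
    congr 1
    exact sum_pi_prod fun i z => q i z * Real.exp (s * f z)
  have step3 : ∏ i, ∑ z, q i z * Real.exp (s * f z) ≤ ∏ i, M i := by
    apply Finset.prod_le_prod
    · intro i _
      apply Finset.sum_nonneg
      intro z _
      exact mul_nonneg (hq i z) (Real.exp_nonneg _)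
    · intro i _; exact hM i
  calc _ ≤ _ := step1
    _ = _ := step2
    _ ≤ _ := mul_le_mul_of_nonneg_left step3 (Real.exp_nonneg _)

lemma slot_marginal {Z : Type*} [Fintype Z] (Q0 : Z → ℝ) (hQ0sum : ∑ z, Q0 z = 1)
    {Ln n : ℕ} (t : Fin Ln) (q : Fin n → Z → ℝ) (φ : (Fin n → Z) → ℝ) :
    ∑ z : Fin Ln → Fin n → Z,
        φ (z t) * ∏ ℓ, ∏ i, (if ℓ = t then q i (z ℓ i) else Q0 (z ℓ i))
      = ∑ y : Fin n → Z, φ y * ∏ i, q i (y i) := by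
  classical
  set g : Fin Ln → (Fin n → Z) → ℝ :=
    fun ℓ y => if ℓ = t then φ y * ∏ i, q i (y i) else ∏ i, Q0 (y i) with hg
  have pt : ∀ z : Fin Ln → Fin n → Z,
      φ (z t) * ∏ ℓ, ∏ i, (if ℓ = t then q i (z ℓ i) else Q0 (z ℓ i))
      = ∏ ℓ, g ℓ (z ℓ) := by
    intro z
    have l1 : ∏ ℓ, ∏ i, (if ℓ = t then q i (z ℓ i) else Q0 (z ℓ i))
        = (∏ ℓ ∈ univ.erase t, ∏ i, Q0 (z ℓ i)) * ∏ i, q i (z t i) := by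
      rw [← Finset.prod_erase_mul _ _ (Finset.mem_univ t)]
      congr 1
      · exact Finset.prod_congr rfl fun ℓ hℓ =>
          Finset.prod_congr rfl fun i _ => if_neg (Finset.ne_of_mem_erase hℓ)
      · exact Finset.prod_congr rfl fun i _ => if_pos rfl
    have l2 : ∏ ℓ, g ℓ (z ℓ)
        = (∏ ℓ ∈ univ.erase t, ∏ i, Q0 (z ℓ i)) * (φ (z t) * ∏ i, q i (z t i)) := by
      rw [← Finset.prod_erase_mul _ _ (Finset.mem_univ t)]
      congr 1
      · exact Finset.prod_congr rfl fun ℓ hℓ => if_neg (Finset.ne_of_mem_erase hℓ)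
      · exact if_pos rfl
    rw [l1, l2]; ring
  have h2 : ∑ z : Fin Ln → Fin n → Z, ∏ ℓ, g ℓ (z ℓ) = ∏ ℓ, ∑ y, g ℓ y := sum_pi_prod g
  have h3 : ∏ ℓ, ∑ y, g ℓ y = ∑ y : Fin n → Z, φ y * ∏ i, q i (y i) := by
    rw [← Finset.prod_erase_mul _ _ (Finset.mem_univ t)]
    have e : ∀ ℓ ∈ univ.erase t, (∑ y, g ℓ y) = 1 := by
      intro ℓ hℓ
      have hne : ℓ ≠ t := Finset.ne_of_mem_erase hℓ
      simp only [hg, if_neg hne]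
      exact sum_prod_pmf_one Q0 hQ0sum n
    rw [Finset.prod_congr rfl e]
    simp [hg]
  rw [Finset.sum_congr rfl fun z _ => pt z, h2, h3]

lemma mgf_bound {Z : Type*} [Fintype Z] (Q : Z → ℝ) (f : Z → ℝ) (B s μ v : ℝ)
    (hQ : ∀ z, 0 ≤ Q z) (hQsum : ∑ z, Q z = 1)
    (hB : ∀ z, |f z| ≤ B)
    (hμ : ∑ z, Q z * f z = μ) (hv : ∑ z, Q z * f z ^ 2 ≤ v)
    (hs : 0 ≤ s) (hsB : s * B ≤ 1) :
    ∑ z, Q z * Real.exp (s * f z) ≤ Real.exp (s * μ + s ^ 2 * v / 2 + s ^ 3 * B ^ 3) := by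
  have hBnn : 0 ≤ B := by
    have hne : Nonempty Z := by
      by_contra h
      rw [not_nonempty_iff] at h
      simp [Finset.univ_eq_empty] at hQsum
    obtain ⟨z⟩ := hne
    exact le_trans (abs_nonneg _) (hB z)
  have key : ∀ z, Real.exp (s * f z) ≤ 1 + s * f z + (s * f z) ^ 2 / 2 + s ^ 3 * |f z| ^ 3 := by
    intro z
    have hx : |s * f z| ≤ 1 := by
      rw [abs_mul, abs_of_nonneg hs]
      exact le_trans (mul_le_mul_of_nonneg_left (hB z) hs) hsB
    have h3 := Real.exp_bound hx (n := 3) (by norm_num)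
    have hexp : Real.exp (s * f z) - (1 + s * f z + (s * f z) ^ 2 / 2)
        ≤ |s * f z| ^ 3 * (4 / (6 * 3)) := by
      have := (abs_le.mp h3).2
      simpa [Finset.sum_range_succ, Nat.factorial] using this
    have habs : |s * f z| ^ 3 * (4 / (6 * 3)) ≤ s ^ 3 * |f z| ^ 3 := by
      rw [abs_mul, abs_of_nonneg hs, mul_pow]
      nlinarith [pow_nonneg hs 3, pow_nonneg (abs_nonneg (f z)) 3]
    linarith
  calc ∑ z, Q z * Real.exp (s * f z)
      ≤ ∑ z, Q z * (1 + s * f z + (s * f z) ^ 2 / 2 + s ^ 3 * |f z| ^ 3) := by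
        apply Finset.sum_le_sum
        intro z _
        exact mul_le_mul_of_nonneg_left (key z) (hQ z)
    _ ≤ 1 + s * μ + s ^ 2 * v / 2 + s ^ 3 * B ^ 3 := by
        have expand : ∑ z, Q z * (1 + s * f z + (s * f z) ^ 2 / 2 + s ^ 3 * |f z| ^ 3)
            = (∑ z, Q z) + s * (∑ z, Q z * f z) + s ^ 2 * (∑ z, Q z * f z ^ 2) / 2
              + s ^ 3 * (∑ z, Q z * |f z| ^ 3) := by
          have pt : ∀ z, Q z * (1 + s * f z + (s * f z) ^ 2 / 2 + s ^ 3 * |f z| ^ 3)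
              = Q z + s * (Q z * f z) + s ^ 2 * (Q z * f z ^ 2) / 2
                + s ^ 3 * (Q z * |f z| ^ 3) := fun z => by ring
          simp_rw [pt, Finset.sum_add_distrib, ← Finset.mul_sum, ← Finset.sum_div, Finset.mul_sum]
        rw [expand, hQsum, hμ]
        have h1 : s ^ 2 * (∑ z, Q z * f z ^ 2) / 2 ≤ s ^ 2 * v / 2 := by
          have := mul_le_mul_of_nonneg_left hv (sq_nonneg s)
          linarith
        have h2 : s ^ 3 * (∑ z, Q z * |f z| ^ 3) ≤ s ^ 3 * B ^ 3 := by
          have hb : ∑ z, Q z * |f z| ^ 3 ≤ ∑ z, Q z * B ^ 3 := by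
            apply Finset.sum_le_sum
            intro z _
            exact mul_le_mul_of_nonneg_left
              (pow_le_pow_left₀ (abs_nonneg _) (hB z) 3) (hQ z)
          rw [← Finset.sum_mul, hQsum, one_mul] at hb
          exact mul_le_mul_of_nonneg_left hb (pow_nonneg hs 3)
        linarith
    _ ≤ Real.exp (s * μ + s ^ 2 * v / 2 + s ^ 3 * B ^ 3) := by
        have := Real.add_one_le_exp (s * μ + s ^ 2 * v / 2 + s ^ 3 * B ^ 3)
        linarith

open Classical in
lemma beta_xt {Z : Type*} [Fintype Z] (Q0 Q1 : Z → ℝ) (f : Z → ℝ)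
    (hQ0nonneg : ∀ z, 0 ≤ Q0 z) (hQ1nonneg : ∀ z, 0 ≤ Q1 z)
    (hQ0sum : ∑ z, Q0 z = 1) (hQ1sum : ∑ z, Q1 z = 1)
    (χ B : ℝ)
    (hmean0 : ∑ z, Q0 z * f z = 0) (hmean1 : ∑ z, Q1 z * f z = χ)
    (hvar0 : ∑ z, Q0 z * f z ^ 2 ≤ B ^ 2) (hvar1 : ∑ z, Q1 z * f z ^ 2 ≤ B ^ 2)
    (hfB : ∀ z, |f z| ≤ B)
    {n Ln : ℕ} (x : Fin n → Bool) (t : Fin Ln)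
    (τn sη : ℝ) (hsη : 0 ≤ sη) (hsηB : sη * B ≤ 1)
    (A : Set (Fin Ln → Fin n → Z))
    (hAc : ∀ z : Fin Ln → Fin n → Z, z ∈ Aᶜ → ∑ i, f (z t i) < τn) :
    ∑ z : Fin Ln → Fin n → Z,
        Set.indicator Aᶜ (fun _ => (1:ℝ)) z *
          ∏ ℓ, ∏ i, (if ℓ = t ∧ x i = true then Q1 (z ℓ i) else Q0 (z ℓ i))
      ≤ Real.exp (sη * τn
          - sη * (((Finset.univ.filter fun i => x i = true).card : ℝ) * χ)
          + (n : ℝ) * (sη ^ 2 * B ^ 2 / 2 + sη ^ 3 * B ^ 3)) := by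
  set w : ℝ := ((Finset.univ.filter fun i => x i = true).card : ℝ) with hwdef
  set q : Fin n → Z → ℝ := fun i => if x i = true then Q1 else Q0 with hqdef
  have hqnn : ∀ i z, 0 ≤ q i z := by
    intro i z
    simp only [hqdef]
    by_cases h : x i = true
    · simp only [h, if_true]; exact hQ1nonneg z
    · simp only [h, if_false]; exact hQ0nonneg z
  set M : Fin n → ℝ := fun i =>
    Real.exp (sη * (-(if x i = true then χ else 0))
      + sη ^ 2 * B ^ 2 / 2 + sη ^ 3 * B ^ 3) with hMdef
  have hM : ∀ i : Fin n,
      ∑ z, q i z * Real.exp (sη * (fun z => -f z) z) ≤ M i := by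
    intro i
    simp only [hMdef, hqdef]
    by_cases h : x i = true
    · simp only [h, if_true]
      exact mgf_bound Q1 (fun z => -f z) B sη (-χ) (B ^ 2)
        hQ1nonneg hQ1sum (fun z => by rw [abs_neg]; exact hfB z)
        (by simp only [mul_neg]; rw [Finset.sum_neg_distrib, hmean1])
        (by simp only [neg_sq]; exact hvar1)
        hsη hsηB
    · simp only [h, if_false]
      have := mgf_bound Q0 (fun z => -f z) B sη (-0) (B ^ 2)
        hQ0nonneg hQ0sum (fun z => by rw [abs_neg]; exact hfB z)
        (by simp only [mul_neg]; rw [Finset.sum_neg_distrib, hmean0])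
        (by simp only [neg_sq]; exact hvar0)
        hsη hsηB
      simpa using this
  have hch := chernoff_tail q hqnn (fun z => -f z) (-τn) sη hsη M hM
  set ψ : (Fin n → Z) → ℝ :=
    fun y => if -τn ≤ ∑ i, -f (y i) then (1:ℝ) else 0 with hψdef
  have hptw : ∀ z : Fin Ln → Fin n → Z,
      Set.indicator Aᶜ (fun _ => (1:ℝ)) z *
        ∏ ℓ, ∏ i, (if ℓ = t ∧ x i = true then Q1 (z ℓ i) else Q0 (z ℓ i))
      ≤ ψ (z t) * ∏ ℓ, ∏ i, (if ℓ = t then q i (z ℓ i) else Q0 (z ℓ i)) := by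
    intro z
    have hD1eq : (∏ ℓ, ∏ i, (if ℓ = t ∧ x i = true then Q1 (z ℓ i) else Q0 (z ℓ i)))
        = ∏ ℓ, ∏ i, (if ℓ = t then q i (z ℓ i) else Q0 (z ℓ i)) := by
      apply Finset.prod_congr rfl
      intro ℓ _
      apply Finset.prod_congr rfl
      intro i _
      simp only [hqdef]
      by_cases h1 : ℓ = t <;> by_cases h2 : x i = true <;> simp [h1, h2]
    rw [hD1eq]
    have hqprod : (0:ℝ) ≤ ∏ ℓ, ∏ i, (if ℓ = t then q i (z ℓ i) else Q0 (z ℓ i)) := by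
      apply Finset.prod_nonneg
      intro ℓ _
      apply Finset.prod_nonneg
      intro i _
      by_cases h1 : ℓ = t
      · simp only [h1, if_true]; exact hqnn i _
      · simp only [h1, if_false]; exact hQ0nonneg _
    by_cases hz : z ∈ Aᶜ
    · have hlt : ∑ i, f (z t i) < τn := hAc z hz
      have hcond : -τn ≤ ∑ i, -f (z t i) := by
        rw [Finset.sum_neg_distrib]
        linarith
      have hψ1 : ψ (z t) = 1 := by
        simp only [hψdef]
        exact if_pos hcond
      rw [Set.indicator_of_mem hz, hψ1]
    · rw [Set.indicator_of_notMem hz, zero_mul]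
      apply mul_nonneg _ hqprod
      simp only [hψdef]
      by_cases hc : -τn ≤ ∑ i, -f (z t i)
      · rw [if_pos hc]; exact zero_le_one
      · rw [if_neg hc]
  have hSA : ∑ i : Fin n, sη * (-(if x i = true then χ else 0))
      = -(sη * (w * χ)) := by
    simp only [mul_neg]
    rw [Finset.sum_neg_distrib, ← Finset.mul_sum, ← Finset.sum_filter,
      Finset.sum_const, nsmul_eq_mul]
  have hSe : ∑ i : Fin n, (sη * (-(if x i = true then χ else 0))
        + sη ^ 2 * B ^ 2 / 2 + sη ^ 3 * B ^ 3)
      = -(sη * (w * χ)) + (n : ℝ) * (sη ^ 2 * B ^ 2 / 2 + sη ^ 3 * B ^ 3) := by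
    have hpt : ∀ i : Fin n, (sη * (-(if x i = true then χ else 0))
        + sη ^ 2 * B ^ 2 / 2 + sη ^ 3 * B ^ 3)
        = sη * (-(if x i = true then χ else 0))
          + (sη ^ 2 * B ^ 2 / 2 + sη ^ 3 * B ^ 3) := fun i => by ring
    rw [Finset.sum_congr rfl fun i _ => hpt i, Finset.sum_add_distrib, hSA,
      Finset.sum_const, Finset.card_univ, Fintype.card_fin, nsmul_eq_mul]
  calc ∑ z : Fin Ln → Fin n → Z,
        Set.indicator Aᶜ (fun _ => (1:ℝ)) z *
          ∏ ℓ, ∏ i, (if ℓ = t ∧ x i = true then Q1 (z ℓ i) else Q0 (z ℓ i))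
      ≤ ∑ z : Fin Ln → Fin n → Z,
          ψ (z t) * ∏ ℓ, ∏ i, (if ℓ = t then q i (z ℓ i) else Q0 (z ℓ i)) :=
        Finset.sum_le_sum fun z _ => hptw z
    _ = ∑ y : Fin n → Z, ψ y * ∏ i, q i (y i) := slot_marginal Q0 hQ0sum t q ψ
    _ ≤ Real.exp (-(sη * (-τn))) * ∏ i, M i := by
        simp only [hψdef]
        simpa using hch
    _ ≤ Real.exp (sη * τn - sη * (w * χ)
          + (n : ℝ) * (sη ^ 2 * B ^ 2 / 2 + sη ^ 3 * B ^ 3)) := by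
        have hMprod : (∏ i, M i) = Real.exp (-(sη * (w * χ))
            + (n : ℝ) * (sη ^ 2 * B ^ 2 / 2 + sη ^ 3 * B ^ 3)) := by
          simp only [hMdef]
          rw [← Real.exp_sum, hSe]
        rw [hMprod, ← Real.exp_add]
        apply Real.exp_le_exp.mpr
        ring_nf
        exact le_refl _


set_option maxHeartbeats 1000000 in
/-- Fix pmfs `Q0, Q1` on a finite alphabet with `Q1 ≪ Q0`, `Q1 ≠ Q0`, and
`χ₂ = Σ_z (Q1(z)−Q0(z))²/Q0(z)`, and `ε > 1`. Let `Lₙ → ∞` with `(log Lₙ)/n → 0`, and for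
each `n` let `Cₙ` be a nonempty set of binary codewords of length `n`, each of weight at
least `ε √(2 n log Lₙ / χ₂)`. Under `H₀` the `N = n·Lₙ` observations (modeled as
`Fin (Lₙ) → Fin n → Z`, slot × position) are i.i.d. `Q0`; under `H₁` a uniformly chosen
codeword is placed in a uniformly chosen slot and each coordinate carrying a `1` has law
`Q1`, all others `Q0`. Then there are rejection regions `Aₙ` whose false-alarm and
missed-detection probabilities both tend to `0`. -/
theorem stmt17 {Z : Type*} [Fintype Z] (Q0 Q1 : Z → ℝ)
    (hQ0nonneg : ∀ z, 0 ≤ Q0 z) (hQ1nonneg : ∀ z, 0 ≤ Q1 z)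
    (hQ0sum : ∑ z, Q0 z = 1) (hQ1sum : ∑ z, Q1 z = 1)
    (hac : ∀ z, Q0 z = 0 → Q1 z = 0) (hne : Q1 ≠ Q0)
    (ε : ℝ) (hε : 1 < ε)
    (L : ℕ → ℕ) (hLpos : ∀ n, 0 < L n)
    (hLinf : Tendsto L atTop atTop)
    (hLsub : Tendsto (fun n => Real.log (L n) / (n : ℝ)) atTop (nhds 0))
    (C : (n : ℕ) → Finset (Fin n → Bool))
    (hCne : ∀ n, (C n).Nonempty)
    (hCwt : ∀ n, ∀ x ∈ C n,
      ε * Real.sqrt (2 * (n : ℝ) * Real.log (L n) / (∑ z, (Q1 z - Q0 z) ^ 2 / Q0 z))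
        ≤ ((Finset.univ.filter fun i => x i = true).card : ℝ)) :
    ∃ A : (n : ℕ) → Set (Fin (L n) → Fin n → Z),
      Tendsto (fun n =>
          ∑ z : Fin (L n) → Fin n → Z,
            Set.indicator (A n) (fun z' => ∏ ℓ, ∏ i, Q0 (z' ℓ i)) z)
        atTop (nhds 0) ∧
      Tendsto (fun n =>
          ∑ z : Fin (L n) → Fin n → Z,
            Set.indicator (A n)ᶜ
              (fun z' => (1 / (((C n).card : ℝ) * (L n : ℝ))) *
                ∑ x ∈ C n, ∑ t : Fin (L n), ∏ ℓ, ∏ i,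
                  (if ℓ = t ∧ x i = true then Q1 (z' ℓ i) else Q0 (z' ℓ i))) z)
        atTop (nhds 0) := by
  classical
  set χ : ℝ := ∑ z, (Q1 z - Q0 z) ^ 2 / Q0 z with hχdef
  set f : Z → ℝ := fun z => Q1 z / Q0 z - 1 with hfdef
  -- basic pointwise facts
  have hQ0f : ∀ z, Q0 z * f z = Q1 z - Q0 z := by
    intro z
    by_cases h : Q0 z = 0
    · simp [hfdef, h, hac z h]
    · simp only [hfdef]; field_simp [h]
  have hmean0 : ∑ z, Q0 z * f z = 0 := by
    simp_rw [hQ0f]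
    rw [Finset.sum_sub_distrib, hQ0sum, hQ1sum, sub_self]
  have hQ0f2 : ∀ z, Q0 z * f z ^ 2 = (Q1 z - Q0 z) ^ 2 / Q0 z := by
    intro z
    by_cases h : Q0 z = 0
    · simp [hfdef, h, hac z h]
    · simp only [hfdef]; field_simp [h]
  have hvar0 : ∑ z, Q0 z * f z ^ 2 = χ := by
    rw [hχdef]
    exact Finset.sum_congr rfl fun z _ => hQ0f2 z
  have hQ1f : ∀ z, Q1 z * f z = (Q1 z - Q0 z) + (Q1 z - Q0 z) ^ 2 / Q0 z := by
    intro z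
    by_cases h : Q0 z = 0
    · simp [hfdef, h, hac z h]
    · simp only [hfdef]; field_simp [h]
      ring
  have hmean1 : ∑ z, Q1 z * f z = χ := by
    simp_rw [hQ1f]
    rw [Finset.sum_add_distrib, Finset.sum_sub_distrib, hQ0sum, hQ1sum, hχdef]
    ring
  have hχpos : 0 < χ := by
    obtain ⟨z0, hz0⟩ := Function.ne_iff.mp hne
    have hQ0z0 : Q0 z0 ≠ 0 := fun h => hz0 (by rw [hac z0 h, h])
    have hfz0 : f z0 ≠ 0 := by
      intro h
      have := hQ0f z0
      rw [h, mul_zero] at this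
      exact hz0 (by linarith)
    rw [← hvar0]
    apply Finset.sum_pos'
    · intro z _
      exact mul_nonneg (hQ0nonneg z) (sq_nonneg _)
    · exact ⟨z0, Finset.mem_univ z0,
        mul_pos (lt_of_le_of_ne (hQ0nonneg z0) (Ne.symm hQ0z0)) (by positivity)⟩
  set B : ℝ := 1 + ∑ z, |f z| with hBdef
  have hB1 : 1 ≤ B := by
    rw [hBdef]
    have : 0 ≤ ∑ z, |f z| := Finset.sum_nonneg fun z _ => abs_nonneg _
    linarith
  have hBpos : 0 < B := lt_of_lt_of_le one_pos hB1
  have hfB : ∀ z, |f z| ≤ B := by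
    intro z
    rw [hBdef]
    have h1 : |f z| ≤ ∑ z, |f z| :=
      Finset.single_le_sum (fun z _ => abs_nonneg (f z)) (Finset.mem_univ z)
    linarith
  have hvarB : ∀ Q : Z → ℝ, (∀ z, 0 ≤ Q z) → (∑ z, Q z = 1) →
      ∑ z, Q z * f z ^ 2 ≤ B ^ 2 := by
    intro Q hQ hQs
    calc ∑ z, Q z * f z ^ 2 ≤ ∑ z, Q z * B ^ 2 := by
          apply Finset.sum_le_sum
          intro z _
          apply mul_le_mul_of_nonneg_left _ (hQ z)
          calc f z ^ 2 = |f z| ^ 2 := (sq_abs _).symm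
            _ ≤ B ^ 2 := pow_le_pow_left₀ (abs_nonneg _) (hfB z) 2
      _ = B ^ 2 := by rw [← Finset.sum_mul, hQs, one_mul]
  -- constants
  set a : ℝ := (1 + ε) / 2 with hadef
  have ha1 : 1 < a := by rw [hadef]; linarith
  have haε : a < ε := by rw [hadef]; linarith
  set η : ℝ := min 1 ((ε - a) * χ / B ^ 2) with hηdef
  have hη0 : 0 < η := by
    rw [hηdef]
    apply lt_min one_pos
    have : 0 < ε - a := by linarith
    positivity
  have hη1 : η ≤ 1 := min_le_left _ _
  have hηB : η * B ^ 2 / χ ≤ ε - a := by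
    have h2 : η ≤ (ε - a) * χ / B ^ 2 := min_le_right _ _
    rw [div_le_iff₀ hχpos]
    calc η * B ^ 2 ≤ ((ε - a) * χ / B ^ 2) * B ^ 2 := by
          apply mul_le_mul_of_nonneg_right h2 (by positivity)
      _ = (ε - a) * χ := by field_simp
  -- sequences
  set s : ℕ → ℝ := fun n => Real.sqrt (2 * Real.log (L n) / (n * χ)) with hsdef
  set τ : ℕ → ℝ := fun n => a * n * χ * s n with hτdef
  have hsnn : ∀ n, 0 ≤ s n := fun n => Real.sqrt_nonneg _
  -- convergence facts
  have hs0 : Tendsto s atTop (nhds 0) := by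
    have h1 : Tendsto (fun n => Real.log (L n) / (n : ℝ) * (2 / χ)) atTop
        (nhds (0 * (2 / χ))) := hLsub.mul_const _
    rw [zero_mul] at h1
    have h2 : ∀ n, s n = Real.sqrt (Real.log (L n) / (n : ℝ) * (2 / χ)) := by
      intro n
      rw [hsdef]
      congr 1
      rw [div_mul_div_comm]
      ring_nf
    have hseq : s = fun n => Real.sqrt (Real.log (L n) / (n : ℝ) * (2 / χ)) :=
      funext h2
    rw [hseq, show (0:ℝ) = Real.sqrt 0 by simp]
    exact h1.sqrt
  have hlog : Tendsto (fun n => Real.log (L n)) atTop atTop :=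
    Real.tendsto_log_atTop.comp (tendsto_natCast_atTop_atTop.comp hLinf)
  have hev1 : ∀ᶠ n : ℕ in atTop, 1 ≤ n := eventually_ge_atTop 1
  have hev2 : ∀ᶠ n : ℕ in atTop, 1 ≤ Real.log (L n) := by
    filter_upwards [hLinf.eventually (eventually_ge_atTop 3)] with n hn
    have h3 : (3 : ℝ) ≤ L n := by exact_mod_cast hn
    rw [Real.le_log_iff_exp_le (by linarith)]
    calc Real.exp 1 ≤ 2.7182818286 := Real.exp_one_lt_d9.le
      _ ≤ 3 := by norm_num
      _ ≤ L n := h3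
  have hev3 : ∀ᶠ n : ℕ in atTop, s n * B ≤ 1 := by
    have h : Tendsto (fun n => s n * B) atTop (nhds (0 * B)) := hs0.mul_const B
    rw [zero_mul] at h
    filter_upwards [h.eventually_lt_const one_pos] with n hn using hn.le
  have hev4 : ∀ᶠ n : ℕ in atTop,
      2 * B ^ 3 * s n / χ ≤ min ((ε - 1) / 2) (η * (ε - a) / 2) := by
    have h : Tendsto (fun n => 2 * B ^ 3 * s n / χ) atTop (nhds (2 * B ^ 3 * 0 / χ)) :=
      (hs0.const_mul _).div_const _
    rw [mul_zero, zero_div] at h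
    have hpos : 0 < min ((ε - 1) / 2) (η * (ε - a) / 2) := by
      apply lt_min (by linarith)
      have : 0 < ε - a := by linarith
      positivity
    filter_upwards [h.eventually_lt_const hpos] with n hn using hn.le
  -- the rejection regions
  refine ⟨fun n => {z : Fin (L n) → Fin n → Z | ∃ ℓ, τ n ≤ ∑ i, f (z ℓ i)}, ?_, ?_⟩
  · -- false alarm
    apply squeeze_zero' (g := fun n => Real.exp ((1 - ε) / 2 * Real.log (L n)))
    · filter_upwards with n
      apply Finset.sum_nonneg
      intro z _
      apply Set.indicator_nonneg
      intro z' _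
      exact Finset.prod_nonneg fun ℓ _ => Finset.prod_nonneg fun i _ => hQ0nonneg _
    · filter_upwards [hev1, hev2, hev3, hev4] with n h1 h2 h3 h4
      have hnpos : (0 : ℝ) < n := by exact_mod_cast h1
      have hlnn : (0 : ℝ) ≤ Real.log (L n) := le_trans zero_le_one h2
      have hs2 : s n ^ 2 = 2 * Real.log (L n) / (n * χ) :=
        Real.sq_sqrt (by positivity)
      set ln := Real.log (L n) with hlndef
      set φ : (Fin n → Z) → ℝ := fun y => if τ n ≤ ∑ i, f (y i) then (1 : ℝ) else 0
        with hφdef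
      have hM : ∀ i : Fin n, ∑ z, Q0 z * Real.exp (s n * f z)
          ≤ Real.exp (s n * 0 + s n ^ 2 * χ / 2 + s n ^ 3 * B ^ 3) := fun i =>
        mgf_bound Q0 f B (s n) 0 χ hQ0nonneg hQ0sum hfB hmean0 (le_of_eq hvar0)
          (hsnn n) h3
      have hch := chernoff_tail (fun _ : Fin n => Q0) (fun i z => hQ0nonneg z) f
        (τ n) (s n) (hsnn n) _ hM
      have hprodM : (∏ _i : Fin n,
            Real.exp (s n * 0 + s n ^ 2 * χ / 2 + s n ^ 3 * B ^ 3))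
          = Real.exp ((n : ℝ) * (s n ^ 2 * χ / 2 + s n ^ 3 * B ^ 3)) := by
        rw [Finset.prod_const, Finset.card_univ, Fintype.card_fin, ← Real.exp_nat_mul]
        congr 1
        ring
      calc ∑ z : Fin (L n) → Fin n → Z,
            Set.indicator {z : Fin (L n) → Fin n → Z | ∃ ℓ, τ n ≤ ∑ i, f (z ℓ i)}
              (fun z' => ∏ ℓ, ∏ i, Q0 (z' ℓ i)) z
          ≤ ∑ z : Fin (L n) → Fin n → Z, ∑ ℓ : Fin (L n),
              φ (z ℓ) * ∏ ℓ', ∏ i, Q0 (z ℓ' i) := by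
            apply Finset.sum_le_sum
            intro z _
            by_cases hz : z ∈ {z : Fin (L n) → Fin n → Z | ∃ ℓ, τ n ≤ ∑ i, f (z ℓ i)}
            · rw [Set.indicator_of_mem hz]
              obtain ⟨ℓ0, hℓ0⟩ := hz
              have hφ1 : φ (z ℓ0) = 1 := by
                simp only [hφdef]
                exact if_pos hℓ0
              have hterm : φ (z ℓ0) * ∏ ℓ', ∏ i, Q0 (z ℓ' i)
                  = ∏ ℓ', ∏ i, Q0 (z ℓ' i) := by rw [hφ1, one_mul]
              refine le_trans (le_of_eq hterm.symm)
                (Finset.single_le_sum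
                  (f := fun ℓ => φ (z ℓ) * ∏ ℓ', ∏ i, Q0 (z ℓ' i))
                  ?_ (Finset.mem_univ ℓ0))
              intro ℓ _
              apply mul_nonneg
              · rw [hφdef]; positivity
              · exact Finset.prod_nonneg fun ℓ' _ =>
                  Finset.prod_nonneg fun i _ => hQ0nonneg _
            · rw [Set.indicator_of_notMem hz]
              apply Finset.sum_nonneg
              intro ℓ _
              apply mul_nonneg
              · rw [hφdef]; positivity
              · exact Finset.prod_nonneg fun ℓ' _ =>
                  Finset.prod_nonneg fun i _ => hQ0nonneg _
        _ = ∑ ℓ : Fin (L n), ∑ z : Fin (L n) → Fin n → Z,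
              φ (z ℓ) * ∏ ℓ', ∏ i, Q0 (z ℓ' i) := Finset.sum_comm
        _ = ∑ _ℓ : Fin (L n), ∑ y : Fin n → Z, φ y * ∏ i, Q0 (y i) := by
            apply Finset.sum_congr rfl
            intro ℓ _
            have hsm := slot_marginal Q0 hQ0sum ℓ (fun _ : Fin n => Q0) φ
            simp only [ite_self] at hsm
            exact hsm
        _ ≤ ∑ _ℓ : Fin (L n), Real.exp (-(s n * τ n)) *
              Real.exp ((n : ℝ) * (s n ^ 2 * χ / 2 + s n ^ 3 * B ^ 3)) := by
            apply Finset.sum_le_sum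
            intro ℓ _
            rw [← hprodM]
            exact hch
        _ ≤ Real.exp ((1 - ε) / 2 * ln) := by
            rw [Finset.sum_const, Finset.card_univ, Fintype.card_fin, nsmul_eq_mul,
              ← Real.exp_add]
            have hLcast : (L n : ℝ) = Real.exp ln := by
              rw [hlndef, Real.exp_log (by exact_mod_cast hLpos n)]
            rw [hLcast, ← Real.exp_add]
            apply Real.exp_le_exp.mpr
            have e1 : s n * τ n = 2 * a * ln := by
              have h : s n * τ n = a * n * χ * s n ^ 2 := by rw [hτdef]; ring
              rw [h, hs2]
              field_simp
            have e2 : (n : ℝ) * (s n ^ 2 * χ / 2) = ln := by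
              rw [hs2]
              field_simp
            have e3 : (n : ℝ) * (s n ^ 3 * B ^ 3) = ln * (2 * B ^ 3 * s n / χ) := by
              have h : s n ^ 3 = s n ^ 2 * s n := by ring
              rw [h, hs2]
              field_simp
            have e4 : (n : ℝ) * (s n ^ 2 * χ / 2 + s n ^ 3 * B ^ 3)
                = ln + ln * (2 * B ^ 3 * s n / χ) := by
              rw [mul_add, e2, e3]
            rw [e1, e4]
            have h4' : 2 * B ^ 3 * s n / χ ≤ (ε - 1) / 2 :=
              le_trans h4 (min_le_left _ _)
            have haux : ln * (2 * B ^ 3 * s n / χ) ≤ ln * ((ε - 1) / 2) :=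
              mul_le_mul_of_nonneg_left h4' hlnn
            have ha' : a = (1 + ε) / 2 := hadef
            nlinarith [hlnn]
    · apply Real.tendsto_exp_atBot.comp
      exact Tendsto.const_mul_atTop_of_neg (by linarith) hlog
  · -- missed detection
    apply squeeze_zero' (g := fun n => Real.exp (-(η * (ε - a) / 2) * Real.log (L n)))
    · filter_upwards with n
      apply Finset.sum_nonneg
      intro z _
      apply Set.indicator_nonneg
      intro z' _
      apply mul_nonneg
      · apply div_nonneg zero_le_one
        exact mul_nonneg (Nat.cast_nonneg _) (Nat.cast_nonneg _)
      · apply Finset.sum_nonneg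
        intro x _
        apply Finset.sum_nonneg
        intro t _
        apply Finset.prod_nonneg
        intro ℓ _
        apply Finset.prod_nonneg
        intro i _
        by_cases h : ℓ = t ∧ x i = true
        · rw [if_pos h]; exact hQ1nonneg _
        · rw [if_neg h]; exact hQ0nonneg _
    · filter_upwards [hev1, hev2, hev3, hev4] with n h1 h2 h3 h4
      have hnpos : (0 : ℝ) < n := by exact_mod_cast h1
      have hlnn : (0 : ℝ) ≤ Real.log (L n) := le_trans zero_le_one h2
      have hs2 : s n ^ 2 = 2 * Real.log (L n) / (n * χ) :=
        Real.sq_sqrt (by positivity)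
      have hns2 : (n : ℝ) * s n ^ 2 = 2 * Real.log (L n) / χ := by
        rw [hs2]
        field_simp
      have hηs : 0 ≤ η * s n := mul_nonneg hη0.le (hsnn n)
      have hηsB : (η * s n) * B ≤ 1 := by
        have h0 : (η * s n) * B ≤ 1 * (s n * B) := by
          have := mul_le_mul_of_nonneg_right hη1 (mul_nonneg (hsnn n) hBpos.le)
          calc (η * s n) * B = η * (s n * B) := by ring
            _ ≤ 1 * (s n * B) := this
        linarith
      have Tb : ∀ x ∈ C n, ∀ t : Fin (L n),
          ∑ z : Fin (L n) → Fin n → Z,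
            Set.indicator ({z : Fin (L n) → Fin n → Z | ∃ ℓ, τ n ≤ ∑ i, f (z ℓ i)})ᶜ
                (fun _ => (1:ℝ)) z *
              ∏ ℓ, ∏ i, (if ℓ = t ∧ x i = true then Q1 (z ℓ i) else Q0 (z ℓ i))
          ≤ Real.exp (-(η * (ε - a) / 2) * Real.log (L n)) := by
        intro x hx t
        have hAc : ∀ z : Fin (L n) → Fin n → Z,
            z ∈ ({z : Fin (L n) → Fin n → Z | ∃ ℓ, τ n ≤ ∑ i, f (z ℓ i)})ᶜ →
            ∑ i, f (z t i) < τ n := by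
          intro z hz
          by_contra hcon
          exact hz ⟨t, not_lt.mp hcon⟩
        have hb := beta_xt Q0 Q1 f hQ0nonneg hQ1nonneg hQ0sum hQ1sum χ B
          hmean0 hmean1 (hvarB Q0 hQ0nonneg hQ0sum) (hvarB Q1 hQ1nonneg hQ1sum)
          hfB x t (τ n) (η * s n) hηs hηsB _ hAc
        refine le_trans hb ?_
        apply Real.exp_le_exp.mpr
        set w : ℝ := ((Finset.univ.filter fun i => x i = true).card : ℝ) with hwdef
        set ln : ℝ := Real.log (L n) with hlndef
        have hw : ε * Real.sqrt (2 * (n : ℝ) * ln / χ) ≤ w := hCwt n x hx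
        have hwχ : ε * ((n : ℝ) * χ * s n) ≤ w * χ := by
          have hA1 : χ * Real.sqrt (2 * (n : ℝ) * ln / χ)
              = Real.sqrt (χ ^ 2 * (2 * (n : ℝ) * ln / χ)) := by
            rw [Real.sqrt_mul (sq_nonneg χ), Real.sqrt_sq hχpos.le]
          have hA2 : ((n : ℝ) * χ) * s n
              = Real.sqrt (((n : ℝ) * χ) ^ 2 * (2 * ln / ((n : ℝ) * χ))) := by
            rw [hsdef, Real.sqrt_mul (sq_nonneg _), Real.sqrt_sq (by positivity)]
          have hargs : χ ^ 2 * (2 * (n : ℝ) * ln / χ)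
              = ((n : ℝ) * χ) ^ 2 * (2 * ln / ((n : ℝ) * χ)) := by
            field_simp
          have hkey : χ * Real.sqrt (2 * (n : ℝ) * ln / χ) = ((n : ℝ) * χ) * s n := by
            rw [hA1, hA2, hargs]
          have hmul := mul_le_mul_of_nonneg_right hw hχpos.le
          calc ε * ((n : ℝ) * χ * s n)
              = ε * (χ * Real.sqrt (2 * (n : ℝ) * ln / χ)) := by rw [hkey]
            _ = ε * Real.sqrt (2 * (n : ℝ) * ln / χ) * χ := by ring
            _ ≤ w * χ := hmul
        have e1 : η * s n * τ n = a * η * χ * ((n : ℝ) * s n ^ 2) := by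
          rw [hτdef]
          ring
        have e1' : a * η * χ * ((n : ℝ) * s n ^ 2) = 2 * a * η * ln := by
          rw [hns2]
          field_simp
        have e2 : η * s n * (ε * ((n : ℝ) * χ * s n)) = 2 * ε * η * ln := by
          have h : η * s n * (ε * ((n : ℝ) * χ * s n))
              = ε * η * χ * ((n : ℝ) * s n ^ 2) := by ring
          rw [h, hns2]
          field_simp
        have e3 : η * s n * (ε * ((n : ℝ) * χ * s n)) ≤ η * s n * (w * χ) :=
          mul_le_mul_of_nonneg_left hwχ hηs
        have E1 : η * s n * τ n - η * s n * (w * χ) ≤ -(2 * η * (ε - a) * ln) := by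
          have := e1.trans e1'
          linarith [e2 ▸ e3]
        have e4 : (n : ℝ) * ((η * s n) ^ 2 * B ^ 2 / 2) = η ^ 2 * B ^ 2 * ln / χ := by
          have h : (n : ℝ) * ((η * s n) ^ 2 * B ^ 2 / 2)
              = η ^ 2 * B ^ 2 / 2 * ((n : ℝ) * s n ^ 2) := by ring
          rw [h, hns2]
          field_simp
        have e5 : η ^ 2 * B ^ 2 * ln / χ ≤ η * (ε - a) * ln := by
          have h := mul_le_mul_of_nonneg_left hηB (mul_nonneg hη0.le hlnn)
          calc η ^ 2 * B ^ 2 * ln / χ = (η * ln) * (η * B ^ 2 / χ) := by ring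
            _ ≤ (η * ln) * (ε - a) := h
            _ = η * (ε - a) * ln := by ring
        have E2 : (n : ℝ) * ((η * s n) ^ 2 * B ^ 2 / 2) ≤ η * (ε - a) * ln :=
          e4 ▸ e5
        have e6 : (n : ℝ) * ((η * s n) ^ 3 * B ^ 3)
            = η ^ 3 * (s n * B ^ 3) * (2 * ln / χ) := by
          have h : (n : ℝ) * ((η * s n) ^ 3 * B ^ 3)
              = η ^ 3 * (s n * B ^ 3) * ((n : ℝ) * s n ^ 2) := by ring
          rw [h, hns2]
        have hη3 : η ^ 3 ≤ 1 := pow_le_one₀ hη0.le hη1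
        have h4' : 2 * B ^ 3 * s n / χ ≤ η * (ε - a) / 2 :=
          le_trans h4 (min_le_right _ _)
        have hsχnn : 0 ≤ 2 * B ^ 3 * s n / χ := by
          have := hsnn n
          positivity
        have E3 : (n : ℝ) * ((η * s n) ^ 3 * B ^ 3) ≤ ln * (η * (ε - a) / 2) := by
          rw [e6]
          have h7 : η ^ 3 * (s n * B ^ 3) * (2 * ln / χ)
              = η ^ 3 * (ln * (2 * B ^ 3 * s n / χ)) := by ring
          rw [h7]
          calc η ^ 3 * (ln * (2 * B ^ 3 * s n / χ))
              ≤ 1 * (ln * (2 * B ^ 3 * s n / χ)) := by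
                apply mul_le_mul_of_nonneg_right hη3
                exact mul_nonneg hlnn hsχnn
            _ = ln * (2 * B ^ 3 * s n / χ) := by ring
            _ ≤ ln * (η * (ε - a) / 2) := mul_le_mul_of_nonneg_left h4' hlnn
        rw [mul_add]
        linarith [E1, E2, E3]
      -- assemble
      have hcnn : (0:ℝ) ≤ 1 / (((C n).card : ℝ) * (L n : ℝ)) := by
        apply div_nonneg zero_le_one
        exact mul_nonneg (Nat.cast_nonneg _) (Nat.cast_nonneg _)
      have hD1nn : ∀ (x : Fin n → Bool) (t : Fin (L n)) (z : Fin (L n) → Fin n → Z),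
          (0:ℝ) ≤ ∏ ℓ, ∏ i, (if ℓ = t ∧ x i = true then Q1 (z ℓ i) else Q0 (z ℓ i)) := by
        intro x t z
        apply Finset.prod_nonneg
        intro ℓ _
        apply Finset.prod_nonneg
        intro i _
        by_cases h : ℓ = t ∧ x i = true
        · rw [if_pos h]; exact hQ1nonneg _
        · rw [if_neg h]; exact hQ0nonneg _
      calc ∑ z : Fin (L n) → Fin n → Z,
            Set.indicator ({z : Fin (L n) → Fin n → Z | ∃ ℓ, τ n ≤ ∑ i, f (z ℓ i)})ᶜ
              (fun z' => (1 / (((C n).card : ℝ) * (L n : ℝ))) *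
                ∑ x ∈ C n, ∑ t : Fin (L n), ∏ ℓ, ∏ i,
                  (if ℓ = t ∧ x i = true then Q1 (z' ℓ i) else Q0 (z' ℓ i))) z
          = ∑ z : Fin (L n) → Fin n → Z,
              (1 / (((C n).card : ℝ) * (L n : ℝ))) *
                ∑ x ∈ C n, ∑ t : Fin (L n),
                  Set.indicator ({z : Fin (L n) → Fin n → Z | ∃ ℓ, τ n ≤ ∑ i, f (z ℓ i)})ᶜ
                      (fun _ => (1:ℝ)) z *
                  ∏ ℓ, ∏ i, (if ℓ = t ∧ x i = true then Q1 (z ℓ i) else Q0 (z ℓ i)) := by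
            apply Finset.sum_congr rfl
            intro z _
            by_cases hz : z ∈ ({z : Fin (L n) → Fin n → Z | ∃ ℓ, τ n ≤ ∑ i, f (z ℓ i)})ᶜ
            · rw [Set.indicator_of_mem hz, Set.indicator_of_mem hz]
              simp only [one_mul]
            · rw [Set.indicator_of_notMem hz]
              simp only [Set.indicator_of_notMem hz, zero_mul,
                Finset.sum_const_zero, mul_zero]
        _ = (1 / (((C n).card : ℝ) * (L n : ℝ))) *
              ∑ x ∈ C n, ∑ t : Fin (L n), ∑ z : Fin (L n) → Fin n → Z,
                Set.indicator ({z : Fin (L n) → Fin n → Z | ∃ ℓ, τ n ≤ ∑ i, f (z ℓ i)})ᶜ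
                    (fun _ => (1:ℝ)) z *
                ∏ ℓ, ∏ i, (if ℓ = t ∧ x i = true then Q1 (z ℓ i) else Q0 (z ℓ i)) := by
            rw [← Finset.mul_sum]
            congr 1
            rw [Finset.sum_comm]
            apply Finset.sum_congr rfl
            intro x _
            rw [Finset.sum_comm]
        _ ≤ (1 / (((C n).card : ℝ) * (L n : ℝ))) *
              ∑ _x ∈ C n, ∑ _t : Fin (L n),
                Real.exp (-(η * (ε - a) / 2) * Real.log (L n)) := by
            apply mul_le_mul_of_nonneg_left _ hcnn
            apply Finset.sum_le_sum
            intro x hx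
            apply Finset.sum_le_sum
            intro t _
            exact Tb x hx t
        _ = Real.exp (-(η * (ε - a) / 2) * Real.log (L n)) := by
            simp only [Finset.sum_const, Finset.card_univ, Fintype.card_fin,
              nsmul_eq_mul]
            have hc1 : ((C n).card : ℝ) ≠ 0 :=
              Nat.cast_ne_zero.mpr (Finset.card_ne_zero_of_mem (hCne n).choose_spec)
            have hL1 : ((L n) : ℝ) ≠ 0 := Nat.cast_ne_zero.mpr (hLpos n).ne'
            field_simp
    · apply Real.tendsto_exp_atBot.comp
      apply Tendsto.const_mul_atTop_of_neg _ hlog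
      have : 0 < ε - a := by linarith
      nlinarith [hη0]
end
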